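/- Let D be a measurable space, let k ≥ 1, let A = Fin k be the (finite, discrete) attribute space, let f be a trade-off function, let P be a probability measure on D, let a : D → A be measurable, let ρ be a Markov kernel from D to A, and let ν be a probability measure on A such that for every z ∈ D the pair (ν, ρ(z)) satisfies the f-DP inequality. Then the strong attribute-inference success probability satisfies ∫_D ρ(z)({a(z)}) dP(z) ≤ 1 − f( max_{â ∈ A} P({z ∈ D : a(z) = â}) ). -/

import Mathlib

open MeasureTheory ProbabilityTheory

/-- A trade-off function: convex, continuous, non-increasing on `[0,1]`,
taking values in `[0,1]` with `f α ≤ 1 - α`. -/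
def IsTradeoff (f : ℝ → ℝ) : Prop :=
  ConvexOn ℝ (Set.Icc (0:ℝ) 1) f ∧ ContinuousOn f (Set.Icc (0:ℝ) 1) ∧
  AntitoneOn f (Set.Icc (0:ℝ) 1) ∧
  ∀ x ∈ Set.Icc (0:ℝ) 1, f x ∈ Set.Icc (0:ℝ) 1 ∧ f x ≤ 1 - x

/-- The pair `(P, Q)` satisfies the `f`-DP inequality: every randomized test `φ` has
`∫ φ dQ ≤ 1 - f (∫ φ dP)`. -/
def FDPIneq {Θ : Type*} [MeasurableSpace Θ] (f : ℝ → ℝ) (P Q : Measure Θ) : Prop :=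
  ∀ φ : Θ → ℝ, Measurable φ → (∀ θ, φ θ ∈ Set.Icc (0:ℝ) 1) →
    ∫ θ, φ θ ∂Q ≤ 1 - f (∫ θ, φ θ ∂P)

/-- Integral of a function of a `Fin k`-valued measurable map, as a finite sum. -/
lemma aux_integral_comp {D : Type*} [MeasurableSpace D] {k : ℕ}
    (P : Measure D) [IsProbabilityMeasure P]
    (a : D → Fin k) (ha : Measurable a) (h : Fin k → ℝ) :
    ∫ z, h (a z) ∂P = ∑ b : Fin k, (P {z : D | a z = b}).toReal * h b := by
  haveI : IsProbabilityMeasure (P.map a) := Measure.isProbabilityMeasure_map ha.aemeasurable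
  have hmeas : Measurable h := measurable_of_countable h
  have h1 : ∫ z, h (a z) ∂P = ∫ b, h b ∂(P.map a) :=
    (integral_map ha.aemeasurable hmeas.aestronglyMeasurable).symm
  rw [h1, integral_fintype Integrable.of_finite]
  refine Finset.sum_congr rfl fun b _ => ?_
  rw [Measure.real, Measure.map_apply ha (measurableSet_singleton b)]
  simp [Set.preimage, smul_eq_mul]

/-- Composition with a `Fin k`-valued map is integrable. -/
lemma aux_integrable_comp {D : Type*} [MeasurableSpace D] {k : ℕ}
    (P : Measure D) [IsProbabilityMeasure P]
    (a : D → Fin k) (ha : Measurable a) (h : Fin k → ℝ) :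
    Integrable (fun z => h (a z)) P := by
  haveI : IsProbabilityMeasure (P.map a) := Measure.isProbabilityMeasure_map ha.aemeasurable
  have hmeas : Measurable h := measurable_of_countable h
  exact (integrable_map_measure hmeas.aestronglyMeasurable ha.aemeasurable).mp
    Integrable.of_finite

/-- SAI bullet of Theorem 3: `f`-DP bound on strong attribute-inference success,
with attribute space `Fin k`. -/
theorem stmt_6 {D : Type*} [MeasurableSpace D]
    (k : ℕ) (hk : 1 ≤ k)
    (f : ℝ → ℝ) (hf : IsTradeoff f)
    (P : Measure D) [IsProbabilityMeasure P]
    (a : D → Fin k) (ha : Measurable a)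
    (ρ : Kernel D (Fin k)) [IsMarkovKernel ρ]
    (ν : Measure (Fin k)) [IsProbabilityMeasure ν]
    (hDP : ∀ z : D, FDPIneq f ν (ρ z)) :
    ∫ z, ((ρ z) {a z}).toReal ∂P ≤
      1 - f (⨆ ahat : Fin k, (P {z : D | a z = ahat}).toReal) := by
  obtain ⟨hconv, hcont, hanti, hbound⟩ := hf
  haveI : NeZero k := ⟨Nat.one_le_iff_ne_zero.mp hk⟩
  set x : Fin k → ℝ := fun b => (ν {b}).toReal with hxdef
  set w : Fin k → ℝ := fun b => (P {z : D | a z = b}).toReal with hwdef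
  set M : ℝ := ⨆ b, w b with hMdef
  have hx0 : ∀ b, 0 ≤ x b := fun b => ENNReal.toReal_nonneg
  have hx1 : ∀ b, x b ≤ 1 := by
    intro b
    have := prob_le_one (μ := ν) (s := {b})
    exact ENNReal.toReal_le_of_le_ofReal one_pos.le (by simpa using this)
  have hw0 : ∀ b, 0 ≤ w b := fun b => ENNReal.toReal_nonneg
  -- sums of masses equal 1
  have hsum_gen : ∀ (μ : Measure (Fin k)) [IsProbabilityMeasure μ],
      ∑ b : Fin k, (μ {b}).toReal = 1 := by
    intro μ hμ
    have h1 : ∫ b, (1 : ℝ) ∂μ = 1 := by simp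
    rw [integral_fintype Integrable.of_finite] at h1
    simpa [smul_eq_mul, Measure.real] using h1
  have hxsum : ∑ b : Fin k, x b = 1 := hsum_gen ν
  have hwsum : ∑ b : Fin k, w b = 1 := by
    haveI : IsProbabilityMeasure (P.map a) := Measure.isProbabilityMeasure_map ha.aemeasurable
    have := hsum_gen (P.map a)
    rw [← this]
    refine Finset.sum_congr rfl fun b _ => ?_
    rw [hwdef]
    rw [Measure.map_apply ha (measurableSet_singleton b)]
    simp [Set.preimage]
  have hwM : ∀ b, w b ≤ M := fun b =>
    le_ciSup (Set.Finite.bddAbove (Set.finite_range w)) b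
  have hM0 : 0 ≤ M := le_trans (hw0 ⟨0, hk⟩) (hwM ⟨0, hk⟩)
  have hM1 : M ≤ 1 := by
    refine ciSup_le fun b => ?_
    calc w b ≤ ∑ b' : Fin k, w b' :=
          Finset.single_le_sum (fun b' _ => hw0 b') (Finset.mem_univ b)
      _ = 1 := hwsum
  -- pointwise bound from the f-DP inequality
  have hpt : ∀ z, ((ρ z) {a z}).toReal ≤ 1 - f (x (a z)) := by
    intro z
    have hφm : Measurable (Set.indicator {a z} (1 : Fin k → ℝ)) :=
      measurable_const.indicator (measurableSet_singleton _)
    have hφ01 : ∀ θ, Set.indicator {a z} (1 : Fin k → ℝ) θ ∈ Set.Icc (0:ℝ) 1 := by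
      intro θ
      by_cases hθ : θ ∈ ({a z} : Set (Fin k)) <;>
        simp [Set.indicator_apply, hθ]
    have := hDP z _ hφm hφ01
    rwa [integral_indicator_one (measurableSet_singleton _),
      integral_indicator_one (measurableSet_singleton _)] at this
  -- the sum ∑ w b * x b lies in [0, M]
  have hsx_le_M : ∑ b : Fin k, w b * x b ≤ M := by
    calc ∑ b : Fin k, w b * x b ≤ ∑ b : Fin k, M * x b :=
          Finset.sum_le_sum fun b _ => mul_le_mul_of_nonneg_right (hwM b) (hx0 b)
      _ = M * ∑ b : Fin k, x b := by rw [Finset.mul_sum]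
      _ = M := by rw [hxsum, mul_one]
  have hsx0 : 0 ≤ ∑ b : Fin k, w b * x b :=
    Finset.sum_nonneg fun b _ => mul_nonneg (hw0 b) (hx0 b)
  -- Jensen
  have hjensen : f (∑ b : Fin k, w b * x b) ≤ ∑ b : Fin k, w b * f (x b) := by
    have := hconv.map_sum_le (t := Finset.univ) (w := w) (p := x)
      (fun b _ => hw0 b) hwsum (fun b _ => ⟨hx0 b, hx1 b⟩)
    simpa [smul_eq_mul] using this
  -- antitonicity
  have hanti' : f M ≤ f (∑ b : Fin k, w b * x b) :=
    hanti ⟨hsx0, le_trans hsx_le_M hM1⟩ ⟨hM0, hM1⟩ hsx_le_M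
  -- put everything together
  have hmono : ∫ z, ((ρ z) {a z}).toReal ∂P ≤ ∫ z, (1 - f (x (a z))) ∂P := by
    refine integral_mono_of_nonneg ?_ ?_ ?_
    · exact Filter.Eventually.of_forall fun z => ENNReal.toReal_nonneg
    · exact aux_integrable_comp P a ha (fun b => 1 - f (x b))
    · exact Filter.Eventually.of_forall hpt
  calc ∫ z, ((ρ z) {a z}).toReal ∂P
      ≤ ∫ z, (1 - f (x (a z))) ∂P := hmono
    _ = ∑ b : Fin k, w b * (1 - f (x b)) := aux_integral_comp P a ha (fun b => 1 - f (x b))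
    _ = 1 - ∑ b : Fin k, w b * f (x b) := by
        simp only [mul_sub, mul_one, Finset.sum_sub_distrib, hwsum]
    _ ≤ 1 - f (∑ b : Fin k, w b * x b) := by linarith [hjensen]
    _ ≤ 1 - f M := by linarith [hanti']
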